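/- (Gauss–Milgram; well-definedness of the Brown invariant) For every nondegenerate finite quadratic form (𝓛, q), the Gauss sum Σ_{x ∈ 𝓛} exp(iπ q(x)) (well defined since q takes values in ℚ/2ℤ) equals |𝓛|^{1/2} · exp(iπ k/4) for some integer k; in particular its absolute value is |𝓛|^{1/2}. -/

import Mathlib

noncomputable section

abbrev QmodTwo : Type := ℚ ⧸ AddSubgroup.zmultiples (2 : ℚ)
abbrev QmodOne : Type := ℚ ⧸ AddSubgroup.zmultiples (1 : ℚ)

def qmk : ℚ → QmodTwo := QuotientAddGroup.mk
def qmk1 : ℚ → QmodOne := QuotientAddGroup.mk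

/-- The doubling homomorphism `ℚ/ℤ → ℚ/2ℤ`, `r ↦ 2r`. -/
def dbl : QmodOne →+ QmodTwo :=
  QuotientAddGroup.map _ _ (AddMonoidHom.mk' (fun r : ℚ => 2 * r) (by intro a b; ring)) (by
    intro x hx
    obtain ⟨k, hk⟩ := AddSubgroup.mem_zmultiples_iff.mp hx
    refine AddSubgroup.mem_comap.mpr (AddSubgroup.mem_zmultiples_iff.mpr ⟨k, ?_⟩)
    simp only [AddMonoidHom.mk'_apply, ← hk, zsmul_eq_mul]
    ring)

/-- The natural projection `ℚ/2ℤ → ℚ/ℤ`. -/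
def toQmodOne : QmodTwo →+ QmodOne :=
  QuotientAddGroup.map _ _ (AddMonoidHom.id ℚ) (by
    intro x hx
    obtain ⟨k, hk⟩ := AddSubgroup.mem_zmultiples_iff.mp hx
    exact AddSubgroup.mem_comap.mpr (AddSubgroup.mem_zmultiples_iff.mpr ⟨2 * k, by
      simp only [AddMonoidHom.id_apply, ← hk, zsmul_eq_mul]
      push_cast
      ring⟩))

/-- `exp(iπ t)` for `t ∈ ℚ/2ℤ`. -/
def ePi : QmodTwo → ℂ :=
  Quotient.lift (fun r : ℚ => Complex.exp (Real.pi * Complex.I * (r : ℂ))) (by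
    intro a b hab
    have h : -a + b ∈ AddSubgroup.zmultiples (2:ℚ) := QuotientAddGroup.leftRel_apply.mp hab
    obtain ⟨k, hk⟩ := AddSubgroup.mem_zmultiples_iff.mp h
    have hb : (b : ℚ) = a + k * 2 := by
      have := hk
      rw [zsmul_eq_mul] at this
      linarith [this]
    rw [hb]
    push_cast
    rw [mul_add, Complex.exp_add]

    have : (Real.pi : ℂ) * Complex.I * ((k:ℂ) * 2) = (k : ℤ) * (2 * Real.pi * Complex.I) := by
      push_cast; ring
    rw [this, Complex.exp_int_mul_two_pi_mul_I, mul_one])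

structure FinQuadForm (L : Type) [AddCommGroup L] where
  q : L → QmodTwo
  b : L → L → QmodOne
  b_symm : ∀ x y, b x y = b y x
  b_add : ∀ x y z, b (x + y) z = b x z + b y z
  q_zsmul : ∀ (n : ℤ) (x : L), q (n • x) = (n ^ 2 : ℤ) • q x
  q_add : ∀ x y, q (x + y) - q x - q y = dbl (b x y)

variable {L : Type} [AddCommGroup L]

/-- The adjoint homomorphism `x ↦ b(x, ·)` into `Hom(L, ℚ/ℤ)`. -/
def FinQuadForm.toHom (F : FinQuadForm L) (x : L) : L →+ QmodOne :=
  AddMonoidHom.mk' (fun y => F.b x y) (fun y z => by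
    show F.b x (y + z) = F.b x y + F.b x z
    rw [F.b_symm x (y + z), F.b_add, F.b_symm y x, F.b_symm z x])

/-- Nondegeneracy: `x ↦ b(x, ·)` is an isomorphism onto `Hom(L, ℚ/ℤ)`. -/
def FinQuadForm.Nondegenerate (F : FinQuadForm L) : Prop :=
  Function.Bijective F.toHom


section AuxGM

open Complex

lemma ePi_mk (r : ℚ) : ePi (qmk r) = Complex.exp (Real.pi * Complex.I * (r : ℂ)) := rfl

lemma qmk_add (r s : ℚ) : qmk (r + s) = qmk r + qmk s := rfl
lemma qmk_neg (r : ℚ) : qmk (-r) = -(qmk r) := rfl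

lemma QmodTwo.ind {C : QmodTwo → Prop} (h : ∀ r : ℚ, C (qmk r)) : ∀ t, C t :=
  fun t => QuotientAddGroup.induction_on t h

lemma QmodOne.ind {C : QmodOne → Prop} (h : ∀ r : ℚ, C (qmk1 r)) : ∀ t, C t :=
  fun t => QuotientAddGroup.induction_on t h

lemma ePi_add (s t : QmodTwo) : ePi (s + t) = ePi s * ePi t := by
  induction s using QmodTwo.ind with | h r =>
  induction t using QmodTwo.ind with | h r' =>
  show ePi (qmk (r + r')) = _
  rw [ePi_mk, ePi_mk, ePi_mk, ← Complex.exp_add]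
  push_cast
  ring_nf

lemma ePi_zero : ePi (0 : QmodTwo) = 1 := by
  show ePi (qmk 0) = 1
  rw [ePi_mk]; push_cast; simp

lemma ePi_neg (t : QmodTwo) : ePi (-t) = (starRingEnd ℂ) (ePi t) := by
  induction t using QmodTwo.ind with | h r =>
  rw [← qmk_neg, ePi_mk, ePi_mk, ← Complex.exp_conj]
  congr 1
  rw [map_mul, map_mul, Complex.conj_ofReal, Complex.conj_I,
    show ((r:ℂ)) = ((r:ℝ):ℂ) by push_cast; ring, Complex.conj_ofReal]
  push_cast
  ring

lemma ePi_ne_zero (t : QmodTwo) : ePi t ≠ 0 := by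
  induction t using QmodTwo.ind with | h r =>
  rw [ePi_mk]; exact Complex.exp_ne_zero _

/-- `exp(2πi r)` for `r ∈ ℚ/ℤ`. -/
def e1 (t : QmodOne) : ℂ := ePi (dbl t)

lemma e1_add (s t : QmodOne) : e1 (s + t) = e1 s * e1 t := by
  unfold e1; rw [map_add, ePi_add]

lemma e1_zero : e1 (0 : QmodOne) = 1 := by
  unfold e1; rw [map_zero, ePi_zero]

lemma dbl_mk (r : ℚ) : dbl (qmk1 r) = qmk (2 * r) := rfl

lemma e1_eq_one_iff (t : QmodOne) : e1 t = 1 ↔ t = 0 := by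
  constructor
  · induction t using QmodOne.ind with | h r =>
    intro h
    unfold e1 at h
    rw [dbl_mk, ePi_mk] at h
    rw [Complex.exp_eq_one_iff] at h
    obtain ⟨m, hm⟩ := h
    have hπ : (Real.pi : ℂ) ≠ 0 := by
      simpa using Real.pi_ne_zero
    have h2 : (r : ℂ) = (m : ℂ) := by
      have hne : ((2:ℂ) * Real.pi * Complex.I) ≠ 0 :=
        mul_ne_zero (mul_ne_zero two_ne_zero
          (Complex.ofReal_ne_zero.mpr Real.pi_ne_zero)) Complex.I_ne_zero
      refine mul_left_cancel₀ hne ?_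
      push_cast at hm ⊢
      linear_combination hm
    have h3 : r = (m : ℚ) := by exact_mod_cast h2
    show qmk1 r = 0
    rw [h3]
    refine (QuotientAddGroup.eq_zero_iff _).mpr ?_
    exact ⟨m, by simp⟩
  · rintro rfl; exact e1_zero

end AuxGM
section AuxGM2

variable {L : Type} [AddCommGroup L] (F : FinQuadForm L)

lemma FinQuadForm.q_zero : F.q 0 = 0 := by
  have h := F.q_zsmul 0 0
  simpa using h

lemma FinQuadForm.b_zero_left (y : L) : F.b 0 y = 0 := by
  have h := F.b_add 0 0 y
  simp only [add_zero] at h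
  exact left_eq_add.mp h

lemma FinQuadForm.q_add' (x y : L) :
    F.q (x + y) = F.q x + F.q y + dbl (F.b x y) := by
  have h := F.q_add x y
  rw [sub_sub, sub_eq_iff_eq_add] at h
  rw [h]; abel

lemma FinQuadForm.b_zsmul_left (n : ℤ) (x y : L) :
    F.b (n • x) y = n • F.b x y := by
  let φ : L →+ QmodOne := AddMonoidHom.mk' (fun z => F.b z y) (fun a b => F.b_add a b y)
  have : F.b (n • x) y = φ (n • x) := rfl
  rw [this, map_zsmul]; rfl

lemma FinQuadForm.b_zsmul_right (n : ℤ) (x y : L) :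
    F.b x (n • y) = n • F.b x y := by
  rw [F.b_symm, F.b_zsmul_left, F.b_symm]

lemma FinQuadForm.b_add_right (x y z : L) :
    F.b x (y + z) = F.b x y + F.b x z := by
  rw [F.b_symm, F.b_add, F.b_symm y x, F.b_symm z x]

/-- Expansion of `q` on a 4-term integer linear combination. -/
lemma FinQuadForm.q_lin4 (c1 c2 c3 c4 : ℤ) (x1 x2 x3 x4 : L) :
    F.q (c1 • x1 + c2 • x2 + c3 • x3 + c4 • x4) =
      (c1^2) • F.q x1 + (c2^2) • F.q x2 + (c3^2) • F.q x3 + (c4^2) • F.q x4 +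
      dbl ((c1*c2) • F.b x1 x2 + (c1*c3) • F.b x1 x3 + (c1*c4) • F.b x1 x4 +
           (c2*c3) • F.b x2 x3 + (c2*c4) • F.b x2 x4 + (c3*c4) • F.b x3 x4) := by
  have e2 : ∀ (m n : ℤ) (u v : L), F.b (m • u) (n • v) = (m * n) • F.b u v := by
    intro m n u v
    rw [F.b_zsmul_left, F.b_zsmul_right, ← mul_smul]
  rw [F.q_add' (c1 • x1 + c2 • x2 + c3 • x3) (c4 • x4),
      F.q_add' (c1 • x1 + c2 • x2) (c3 • x3),
      F.q_add' (c1 • x1) (c2 • x2),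
      F.b_add, F.b_add, F.b_add,
      F.q_zsmul, F.q_zsmul, F.q_zsmul, F.q_zsmul,
      e2, e2, e2, e2, e2, e2]
  simp only [map_add]
  abel

lemma FinQuadForm.toHom_zero : F.toHom 0 = 0 := by
  ext y
  exact F.b_zero_left y

end AuxGM2
section AuxGM3

open Complex

variable {L : Type} [AddCommGroup L] [Fintype L]

lemma sum_e1_hom_eq_zero (φ : L →+ QmodOne) (hφ : φ ≠ 0) :
    ∑ y : L, e1 (φ y) = 0 := by
  have hy : ∃ y₀ : L, φ y₀ ≠ 0 := by
    by_contra h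
    push_neg at h
    exact hφ (DFunLike.ext _ _ fun y => h y)
  obtain ⟨y₀, hy₀⟩ := hy
  have key : e1 (φ y₀) * ∑ y : L, e1 (φ y) = ∑ y : L, e1 (φ y) := by
    rw [Finset.mul_sum]
    exact Fintype.sum_equiv (Equiv.addLeft y₀)
      (fun y => e1 (φ y₀) * e1 (φ y)) (fun y => e1 (φ y))
      (fun y => by
        show e1 (φ y₀) * e1 (φ y) = e1 (φ (y₀ + y))
        rw [map_add, e1_add])
  have h2 : (e1 (φ y₀) - 1) * ∑ y : L, e1 (φ y) = 0 := by
    rw [sub_mul, one_mul, key, sub_self]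
  rcases mul_eq_zero.mp h2 with h | h
  · exact absurd ((e1_eq_one_iff _).mp (sub_eq_zero.mp h)) hy₀
  · exact h

lemma gauss_mul_conj (F : FinQuadForm L) (hnd : F.Nondegenerate) :
    (∑ x : L, ePi (F.q x)) * (starRingEnd ℂ) (∑ x : L, ePi (F.q x)) =
      (Fintype.card L : ℂ) := by
  have hconj : (starRingEnd ℂ) (∑ x : L, ePi (F.q x)) = ∑ y : L, ePi (-F.q y) := by
    rw [map_sum]
    exact Finset.sum_congr rfl fun y _ => (ePi_neg _).symm
  have step : ∀ y : L, ∑ x : L, ePi (F.q x + -F.q y) =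
      ∑ z : L, ePi (F.q z) * e1 (F.toHom z y) := by
    intro y
    refine (Fintype.sum_equiv (Equiv.addLeft y)
      (fun z => ePi (F.q z) * e1 (F.toHom z y))
      (fun x => ePi (F.q x + -F.q y)) (fun z => ?_)).symm
    show ePi (F.q z) * e1 (F.toHom z y) = ePi (F.q (y + z) + -F.q y)
    have hq : F.q (y + z) + -F.q y = F.q z + dbl (F.b y z) := by
      rw [F.q_add']; abel
    rw [hq, ePi_add]
    congr 1
    show ePi (dbl (F.b z y)) = ePi (dbl (F.b y z))
    rw [F.b_symm]
  calc (∑ x : L, ePi (F.q x)) * (starRingEnd ℂ) (∑ x : L, ePi (F.q x))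
      = ∑ x : L, ∑ y : L, ePi (F.q x) * ePi (-F.q y) := by
        rw [hconj, Finset.sum_mul_sum]
    _ = ∑ y : L, ∑ x : L, ePi (F.q x + -F.q y) := by
        rw [Finset.sum_comm]
        exact Finset.sum_congr rfl fun y _ =>
          Finset.sum_congr rfl fun x _ => (ePi_add _ _).symm
    _ = ∑ y : L, ∑ z : L, ePi (F.q z) * e1 (F.toHom z y) := by
        exact Finset.sum_congr rfl fun y _ => step y
    _ = ∑ z : L, ePi (F.q z) * ∑ y : L, e1 (F.toHom z y) := by
        rw [Finset.sum_comm]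
        exact Finset.sum_congr rfl fun z _ => (Finset.mul_sum _ _ _).symm
    _ = (Fintype.card L : ℂ) := by
        rw [Fintype.sum_eq_single (0 : L) (fun z hz => ?_)]
        · rw [F.q_zero, ePi_zero, one_mul]
          have : ∀ y : L, e1 (F.toHom 0 y) = 1 := fun y => by
            rw [F.toHom_zero]; exact e1_zero
          simp only [this, Finset.sum_const, Finset.card_univ, nsmul_eq_mul, mul_one]
        · have hφ : F.toHom z ≠ 0 := fun h => hz (hnd.injective (h.trans F.toHom_zero.symm))
          rw [sum_e1_hom_eq_zero (F.toHom z) hφ, mul_zero]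

lemma gauss_abs (F : FinQuadForm L) (hnd : F.Nondegenerate) :
    ‖∑ x : L, ePi (F.q x)‖ = Real.sqrt (Fintype.card L) := by
  have h := gauss_mul_conj F hnd
  rw [Complex.mul_conj] at h
  have h2 : Complex.normSq (∑ x : L, ePi (F.q x)) = (Fintype.card L : ℝ) := by
    exact_mod_cast h
  rw [Complex.norm_def, h2]

end AuxGM3
section AuxGM4

open Complex

variable {L : Type} [AddCommGroup L] [Fintype L]

lemma q_card_sq_smul (F : FinQuadForm L) (x : L) :
    ((Fintype.card L : ℤ) ^ 2) • F.q x = 0 := by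
  have hx : (Fintype.card L : ℤ) • x = 0 := by
    rw [natCast_zsmul]; exact card_nsmul_eq_zero
  have h := F.q_zsmul (Fintype.card L) x
  rw [hx, F.q_zero] at h
  exact h.symm

lemma smul_E_eq_neg (F : FinQuadForm L) (A B C D : ℤ)
    (hE : A ^ 2 + B ^ 2 + C ^ 2 + D ^ 2 = (Fintype.card L : ℤ) ^ 2 - 1) (x : L) :
    (A ^ 2) • F.q x + (B ^ 2) • F.q x + (C ^ 2) • F.q x + (D ^ 2) • F.q x = -F.q x := by
  have h1 : (A ^ 2) • F.q x + (B ^ 2) • F.q x + (C ^ 2) • F.q x + (D ^ 2) • F.q x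
      = (A ^ 2 + B ^ 2 + C ^ 2 + D ^ 2) • F.q x := by module
  rw [h1, hE, sub_zsmul, one_zsmul, q_card_sq_smul F x, zero_add]

/-- Injectivity of the quaternion-multiplication map. -/
lemma quat_smul_inj (A B C D : ℤ)
    (hE : A ^ 2 + B ^ 2 + C ^ 2 + D ^ 2 = (Fintype.card L : ℤ) ^ 2 - 1)
    (x y : L) (h : (A ^ 2 + B ^ 2 + C ^ 2 + D ^ 2) • x = (A ^ 2 + B ^ 2 + C ^ 2 + D ^ 2) • y) :
    x = y := by
  set E := A ^ 2 + B ^ 2 + C ^ 2 + D ^ 2 with hEdef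
  have h0 : E • (x - y) = 0 := by rw [smul_sub, h, sub_self]
  have hd1 : (addOrderOf (x - y) : ℤ) ∣ E := addOrderOf_dvd_iff_zsmul_eq_zero.mpr h0
  have hd2 : (addOrderOf (x - y) : ℤ) ∣ (Fintype.card L : ℤ) ^ 2 := by
    have hn : addOrderOf (x - y) ∣ Fintype.card L := addOrderOf_dvd_card
    exact_mod_cast hn.trans (dvd_pow_self _ two_ne_zero)
  have hd3 : (addOrderOf (x - y) : ℤ) ∣ 1 := by
    have := dvd_sub hd2 hd1
    rw [hE] at this
    simpa using this
  have h1 : addOrderOf (x - y) = 1 := by exact_mod_cast Int.eq_one_of_dvd_one (by positivity) hd3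
  exact sub_eq_zero.mp (AddMonoid.addOrderOf_eq_one_iff.mp h1)

end AuxGM4
section AuxGM5

open Complex

variable {L : Type} [AddCommGroup L] [Fintype L]

lemma gauss_pow_four_conj (F : FinQuadForm L) :
    (starRingEnd ℂ) ((∑ x : L, ePi (F.q x)) ^ 4) = (∑ x : L, ePi (F.q x)) ^ 4 := by
  obtain ⟨a, b, c, d, habcd⟩ := Nat.sum_four_squares (Fintype.card L ^ 2 - 1)
  have hcard : 0 < Fintype.card L := Fintype.card_pos
  have h1 : 1 ≤ Fintype.card L ^ 2 := Nat.one_le_pow _ _ hcard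
  set A : ℤ := (a : ℤ)
  set B : ℤ := (b : ℤ)
  set C : ℤ := (c : ℤ)
  set D : ℤ := (d : ℤ)
  have hE : A ^ 2 + B ^ 2 + C ^ 2 + D ^ 2 = (Fintype.card L : ℤ) ^ 2 - 1 := by
    have := congrArg (Nat.cast : ℕ → ℤ) habcd
    push_cast [Nat.cast_sub h1] at this
    push_cast [A, B, C, D]
    linarith [this]
  -- the quaternion multiplication map
  set T : L × L × L × L → L × L × L × L := fun p =>
    (A • p.1 + (-B) • p.2.1 + (-C) • p.2.2.1 + (-D) • p.2.2.2,
     B • p.1 + A • p.2.1 + (-D) • p.2.2.1 + C • p.2.2.2,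
     C • p.1 + D • p.2.1 + A • p.2.2.1 + (-B) • p.2.2.2,
     D • p.1 + (-C) • p.2.1 + B • p.2.2.1 + A • p.2.2.2) with hT
  set Qf : L × L × L × L → QmodTwo := fun p =>
    F.q p.1 + F.q p.2.1 + F.q p.2.2.1 + F.q p.2.2.2 with hQf
  have hQT : ∀ p, Qf (T p) = -Qf p := by
    rintro ⟨x1, x2, x3, x4⟩
    show F.q (A • x1 + (-B) • x2 + (-C) • x3 + (-D) • x4) +
         F.q (B • x1 + A • x2 + (-D) • x3 + C • x4) +
         F.q (C • x1 + D • x2 + A • x3 + (-B) • x4) +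
         F.q (D • x1 + (-C) • x2 + B • x3 + A • x4) =
         -(F.q x1 + F.q x2 + F.q x3 + F.q x4)
    rw [F.q_lin4 A (-B) (-C) (-D) x1 x2 x3 x4,
        F.q_lin4 B A (-D) C x1 x2 x3 x4,
        F.q_lin4 C D A (-B) x1 x2 x3 x4,
        F.q_lin4 D (-C) B A x1 x2 x3 x4]
    simp only [map_add, map_zsmul]
    have hx1 := smul_E_eq_neg F A B C D hE x1
    have hx2 := smul_E_eq_neg F A B C D hE x2
    have hx3 := smul_E_eq_neg F A B C D hE x3
    have hx4 := smul_E_eq_neg F A B C D hE x4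
    simp only [neg_add]
    rw [← hx1, ← hx2, ← hx3, ← hx4]
    module
  have hTinj : Function.Injective T := by
    rintro ⟨x1, x2, x3, x4⟩ ⟨y1, y2, y3, y4⟩ h
    simp only [hT, Prod.mk.injEq] at h
    obtain ⟨h1, h2, h3, h4⟩ := h
    refine Prod.ext ?_ (Prod.ext ?_ (Prod.ext ?_ ?_))
    · apply quat_smul_inj A B C D hE
      calc (A ^ 2 + B ^ 2 + C ^ 2 + D ^ 2) • x1
          = A • (A • x1 + (-B) • x2 + (-C) • x3 + (-D) • x4) +
            B • (B • x1 + A • x2 + (-D) • x3 + C • x4) +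
            C • (C • x1 + D • x2 + A • x3 + (-B) • x4) +
            D • (D • x1 + (-C) • x2 + B • x3 + A • x4) := by module
        _ = A • (A • y1 + (-B) • y2 + (-C) • y3 + (-D) • y4) +
            B • (B • y1 + A • y2 + (-D) • y3 + C • y4) +
            C • (C • y1 + D • y2 + A • y3 + (-B) • y4) +
            D • (D • y1 + (-C) • y2 + B • y3 + A • y4) := by rw [h1, h2, h3, h4]
        _ = (A ^ 2 + B ^ 2 + C ^ 2 + D ^ 2) • y1 := by module
    · apply quat_smul_inj A B C D hE
      calc (A ^ 2 + B ^ 2 + C ^ 2 + D ^ 2) • x2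
          = (-B) • (A • x1 + (-B) • x2 + (-C) • x3 + (-D) • x4) +
            A • (B • x1 + A • x2 + (-D) • x3 + C • x4) +
            D • (C • x1 + D • x2 + A • x3 + (-B) • x4) +
            (-C) • (D • x1 + (-C) • x2 + B • x3 + A • x4) := by module
        _ = (-B) • (A • y1 + (-B) • y2 + (-C) • y3 + (-D) • y4) +
            A • (B • y1 + A • y2 + (-D) • y3 + C • y4) +
            D • (C • y1 + D • y2 + A • y3 + (-B) • y4) +
            (-C) • (D • y1 + (-C) • y2 + B • y3 + A • y4) := by rw [h1, h2, h3, h4]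
        _ = (A ^ 2 + B ^ 2 + C ^ 2 + D ^ 2) • y2 := by module
    · apply quat_smul_inj A B C D hE
      calc (A ^ 2 + B ^ 2 + C ^ 2 + D ^ 2) • x3
          = (-C) • (A • x1 + (-B) • x2 + (-C) • x3 + (-D) • x4) +
            (-D) • (B • x1 + A • x2 + (-D) • x3 + C • x4) +
            A • (C • x1 + D • x2 + A • x3 + (-B) • x4) +
            B • (D • x1 + (-C) • x2 + B • x3 + A • x4) := by module
        _ = (-C) • (A • y1 + (-B) • y2 + (-C) • y3 + (-D) • y4) +
            (-D) • (B • y1 + A • y2 + (-D) • y3 + C • y4) +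
            A • (C • y1 + D • y2 + A • y3 + (-B) • y4) +
            B • (D • y1 + (-C) • y2 + B • y3 + A • y4) := by rw [h1, h2, h3, h4]
        _ = (A ^ 2 + B ^ 2 + C ^ 2 + D ^ 2) • y3 := by module
    · apply quat_smul_inj A B C D hE
      calc (A ^ 2 + B ^ 2 + C ^ 2 + D ^ 2) • x4
          = (-D) • (A • x1 + (-B) • x2 + (-C) • x3 + (-D) • x4) +
            C • (B • x1 + A • x2 + (-D) • x3 + C • x4) +
            (-B) • (C • x1 + D • x2 + A • x3 + (-B) • x4) +
            A • (D • x1 + (-C) • x2 + B • x3 + A • x4) := by module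
        _ = (-D) • (A • y1 + (-B) • y2 + (-C) • y3 + (-D) • y4) +
            C • (B • y1 + A • y2 + (-D) • y3 + C • y4) +
            (-B) • (C • y1 + D • y2 + A • y3 + (-B) • y4) +
            A • (D • y1 + (-C) • y2 + B • y3 + A • y4) := by rw [h1, h2, h3, h4]
        _ = (A ^ 2 + B ^ 2 + C ^ 2 + D ^ 2) • y4 := by module
  have hTbij : Function.Bijective T := Finite.injective_iff_bijective.mp hTinj
  have hG4 : (∑ x : L, ePi (F.q x)) ^ 4 = ∑ p : L × L × L × L, ePi (Qf p) := by
    simp only [hQf, Fintype.sum_prod_type, ePi_add]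
    rw [show (4 : ℕ) = 3 + 1 from rfl, pow_succ,
        show (3 : ℕ) = 2 + 1 from rfl, pow_succ, sq]
    simp only [Finset.sum_mul, Finset.mul_sum]
    refine Finset.sum_congr rfl fun x1 _ => Finset.sum_congr rfl fun x2 _ =>
      Finset.sum_congr rfl fun x3 _ => Finset.sum_congr rfl fun x4 _ => by ring
  rw [hG4, map_sum]
  calc ∑ p : L × L × L × L, (starRingEnd ℂ) (ePi (Qf p))
      = ∑ p : L × L × L × L, ePi (Qf (T p)) := by
        refine Finset.sum_congr rfl fun p _ => ?_
        rw [hQT p, ePi_neg]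
    _ = ∑ p : L × L × L × L, ePi (Qf p) :=
        Fintype.sum_bijective T hTbij _ _ (fun p => rfl)

end AuxGM5
open Complex in
/-- Gauss–Milgram: for a nondegenerate finite quadratic form `(𝓛, q)` the Gauss
sum `Σ_x exp(iπ q(x))` equals `|𝓛|^{1/2}·exp(iπk/4)` for some integer `k`; in particular its
absolute value is `|𝓛|^{1/2}`. -/
theorem gauss_milgram (L : Type) [AddCommGroup L] [Fintype L]
    (F : FinQuadForm L) (hnd : F.Nondegenerate) :
    (∃ k : ℤ, ∑ x : L, ePi (F.q x) =
      (Real.sqrt (Fintype.card L) : ℂ) *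
        Complex.exp (Real.pi * Complex.I * (k : ℂ) / 4)) ∧
    ‖∑ x : L, ePi (F.q x)‖ = Real.sqrt (Fintype.card L) := by
  have habs := gauss_abs F hnd
  refine ⟨?_, habs⟩
  set G : ℂ := ∑ x : L, ePi (F.q x) with hG
  set n : ℕ := Fintype.card L with hn
  have hnpos : 0 < n := Fintype.card_pos
  have hn0 : (0:ℝ) ≤ (n:ℝ) := by positivity
  have hsq : Real.sqrt n ^ 2 = (n:ℝ) := Real.sq_sqrt hn0
  have hsqrtpos : 0 < Real.sqrt n := Real.sqrt_pos.mpr (by exact_mod_cast hnpos)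
  have hre : G ^ 4 = ((G ^ 4).re : ℂ) := (Complex.conj_eq_iff_re.mp (gauss_pow_four_conj F)).symm
  have habs4 : ‖G ^ 4‖ = (n:ℝ) ^ 2 := by
    rw [norm_pow, habs, show (4:ℕ) = 2 * 2 from rfl, pow_mul, hsq]
  have hr2 : (G ^ 4).re ^ 2 = ((n:ℝ) ^ 2) ^ 2 := by
    have h1 : |(G ^ 4).re| = (n:ℝ) ^ 2 := by
      rw [← Real.norm_eq_abs, ← Complex.norm_real, ← hre]; exact habs4
    rw [← _root_.sq_abs, h1]
  have hG8 : G ^ 8 = (((n:ℝ) ^ 2) ^ 2 : ℝ) := by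
    calc G ^ 8 = (G ^ 4) ^ 2 := by ring
      _ = (((G ^ 4).re : ℂ)) ^ 2 := by rw [← hre]
      _ = (((G ^ 4).re ^ 2 : ℝ) : ℂ) := by push_cast; ring
      _ = (((n:ℝ) ^ 2) ^ 2 : ℝ) := by rw [hr2]
  have hs8 : ((Real.sqrt n : ℝ) : ℂ) ^ 8 = (((n:ℝ) ^ 2) ^ 2 : ℝ) := by
    have : (Real.sqrt n) ^ 8 = ((n:ℝ) ^ 2) ^ 2 := by
      rw [show (8:ℕ) = 2 * 4 from rfl, pow_mul, hsq]; ring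
    rw [← this]; push_cast; ring
  have hsne : ((Real.sqrt n : ℝ) : ℂ) ≠ 0 := by
    exact_mod_cast (Complex.ofReal_ne_zero.mpr (ne_of_gt hsqrtpos))
  have hu : (G / ((Real.sqrt n : ℝ) : ℂ)) ^ 8 = 1 := by
    rw [div_pow, hG8, hs8, div_self (Complex.ofReal_ne_zero.mpr (by positivity))]
  have hprim : IsPrimitiveRoot (Complex.exp (2 * (Real.pi:ℂ) * Complex.I / (8:ℕ))) 8 :=
    Complex.isPrimitiveRoot_exp 8 (by norm_num)
  obtain ⟨i, hi8, hζ⟩ := hprim.eq_pow_of_pow_eq_one hu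
  refine ⟨(i : ℤ), ?_⟩
  have hGe : G = ((Real.sqrt n : ℝ) : ℂ) * Complex.exp (2 * (Real.pi:ℂ) * Complex.I / (8:ℕ)) ^ i := by
    field_simp at hζ
    rw [← hζ]; ring
  rw [hGe, ← Complex.exp_nat_mul]
  congr 1
  push_cast
  ring

end
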